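/- Let R be a commutative ring and G a Gabriel filter of finite type on R. Then there exists a silting R-module T such that Gen T = Div G; in particular, the class Div G of G-divisible modules is a silting class. -/

import Mathlib

universe u

/-- `M ∈ D_σ`: every `R`-linear map `A → M` factors through `σ : A → B`. -/
def MemD {R : Type u} [Ring R] {A B : Type u} [AddCommGroup A] [Module R A]
    [AddCommGroup B] [Module R B] (σ : A →ₗ[R] B)
    (M : Type u) [AddCommGroup M] [Module R M] : Prop :=
  ∀ f : A →ₗ[R] M, ∃ g : B →ₗ[R] M, g.comp σ = f

/-- `M ∈ Gen T`: `M` is an epimorphic image of a direct sum of copies of `T`. -/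
def MemGen (R : Type u) [Ring R] (T : Type u) [AddCommGroup T] [Module R T]
    (M : Type u) [AddCommGroup M] [Module R M] : Prop :=
  ∃ (ι : Type u) (g : (ι →₀ T) →ₗ[R] M), Function.Surjective g

/-- `T` is a silting module: it has a projective presentation `P₋₁ →σ P₀ → T → 0`
with `Gen T = D_σ`. -/
def IsSilting (R : Type u) [Ring R] (T : Type u) [AddCommGroup T] [Module R T] : Prop :=
  ∃ (P₁ P₀ : Type u) (_ : AddCommGroup P₁) (_ : Module R P₁)
    (_ : AddCommGroup P₀) (_ : Module R P₀),
      Module.Projective R P₁ ∧ Module.Projective R P₀ ∧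
      ∃ (σ : P₁ →ₗ[R] P₀) (π : P₀ →ₗ[R] T),
        Function.Surjective π ∧ LinearMap.ker π = LinearMap.range σ ∧
        ∀ (M : Type u) [AddCommGroup M] [Module R M], MemGen R T M ↔ MemD σ M

/-- `G` is a Gabriel filter of ideals of a commutative ring `R`. Here
`(I : x) = {r | x * r ∈ I}` is realized as the comap of `I` along `r ↦ x • r`. -/
def IsGabrielFilter {R : Type u} [CommRing R] (G : Set (Ideal R)) : Prop :=
  ⊤ ∈ G ∧
  (∀ I J : Ideal R, I ∈ G → I ≤ J → J ∈ G) ∧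
  (∀ I ∈ G, ∀ x : R, Submodule.comap (LinearMap.lsmul R R x) I ∈ G) ∧
  (∀ J : Ideal R, (∃ I ∈ G, ∀ x ∈ I, Submodule.comap (LinearMap.lsmul R R x) J ∈ G) →
    J ∈ G)

/-- `G` is of finite type: every ideal of `G` contains a finitely generated ideal
belonging to `G`. -/
def GabrielFiniteType {R : Type u} [CommRing R] (G : Set (Ideal R)) : Prop :=
  ∀ I ∈ G, ∃ J ∈ G, J ≤ I ∧ J.FG

/-- `M ∈ Div G`: `M` is `G`-divisible, i.e. `I • M = M` for every `I ∈ G`. -/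
def MemDiv {R : Type u} [CommRing R] (G : Set (Ideal R))
    (M : Type u) [AddCommGroup M] [Module R M] : Prop :=
  ∀ I ∈ G, I • (⊤ : Submodule R M) = ⊤


namespace Stmt15Aux

variable {R : Type u} [CommRing R] (G : Set (Ideal R))

/-- Finite families of elements of `R` whose span lies in `G`, with a `Bool` tag. -/
abbrev Lam : Type u := (Σ n : ℕ, {a : Fin n → R // Ideal.span (Set.range a) ∈ G}) × Bool

/-- letters: an index into the family of a `Lam`. -/
abbrev Lttr : Type u := Σ p : Lam G, Fin p.1.1

/-- words -/
abbrev W : Type u := List (Lttr G)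

abbrev F : Type u := W G →₀ R
abbrev F' : Type u := (W G × Lam G) →₀ R

def gens (p : Lam G) : Fin p.1.1 → R := p.1.2.1

lemma gens_mem (p : Lam G) (i : Fin p.1.1) :
    gens G p i ∈ Ideal.span (Set.range (gens G p)) :=
  Ideal.subset_span ⟨i, rfl⟩

lemma gens_span_mem (p : Lam G) : Ideal.span (Set.range (gens G p)) ∈ G := p.1.2.2

noncomputable def rel (z : W G × Lam G) : F G :=
  Finsupp.single z.1 1 - ∑ i, gens G z.2 i • Finsupp.single ((⟨z.2, i⟩ : Lttr G) :: z.1) (1 : R)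

noncomputable def sigma : F' G →ₗ[R] F G :=
  Finsupp.lsum R fun z => LinearMap.toSpanSingleton R (F G) (rel G z)

lemma sigma_single (z : W G × Lam G) (r : R) :
    sigma G (Finsupp.single z r) = r • rel G z := by
  simp [sigma]

variable {M : Type u} [AddCommGroup M] [Module R M]

lemma rep_of_smul_top {n : ℕ} {a : Fin n → R}
    (h : Ideal.span (Set.range a) • (⊤ : Submodule R M) = ⊤) (v : M) :
    ∃ c : Fin n → M, ∑ i, a i • c i = v := by
  have hv : v ∈ Ideal.span (Set.range a) • (⊤ : Submodule R M) := by rw [h]; trivial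
  refine Submodule.smul_induction_on hv ?_ ?_
  · intro r hr m _
    obtain ⟨c, hc⟩ := Submodule.mem_span_range_iff_exists_fun R |>.1 hr
    refine ⟨fun i => c i • m, ?_⟩
    rw [← hc, Finset.sum_smul]
    simp [smul_smul, mul_comm]
  · rintro x y ⟨c, hc⟩ ⟨d, hd⟩
    exact ⟨c + d, by simp [Finset.sum_add_distrib, smul_add, ← hc, ← hd]⟩

section rec

variable (hM : ∀ p : Lam G, Ideal.span (Set.range (gens G p)) • (⊤ : Submodule R M) = ⊤)

noncomputable def pick (p : Lam G) (v : M) : Fin p.1.1 → M :=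
  Classical.choose (rep_of_smul_top (hM p) v)

lemma pick_spec (p : Lam G) (v : M) : ∑ i, gens G p i • pick G hM p v i = v :=
  Classical.choose_spec (rep_of_smul_top (hM p) v)

/-- generic recursive solution. -/
noncomputable def ysol (m : M) (t : W G × Lam G → M) : W G → M
  | [] => m
  | (⟨p, i⟩ :: w) => pick G hM p (ysol m t w - t (w, p)) i

lemma ysol_spec (m : M) (t : W G × Lam G → M) (w : W G) (p : Lam G) :
    ysol G hM m t w - ∑ i, gens G p i • ysol G hM m t ((⟨p, i⟩ : Lttr G) :: w) = t (w, p) := by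
  have : ∑ i, gens G p i • ysol G hM m t ((⟨p, i⟩ : Lttr G) :: w)
      = ysol G hM m t w - t (w, p) := by
    rw [show (fun i => gens G p i • ysol G hM m t ((⟨p, i⟩ : Lttr G) :: w))
        = fun i => gens G p i • pick G hM p (ysol G hM m t w - t (w, p)) i from rfl]
    exact pick_spec G hM p _
  rw [this]; abel

end rec


section main

variable (hM : MemDiv G M)

/-- G-divisible implies in D_sigma. -/
lemma memD_of_memDiv (hM : MemDiv G M) : MemD (sigma G) M := by
  intro f
  set hM' : ∀ p : Lam G, Ideal.span (Set.range (gens G p)) • (⊤ : Submodule R M) = ⊤ :=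
    fun p => hM _ (gens_span_mem G p) with hMdef
  set y : W G → M := ysol G hM' 0 (fun z => f (Finsupp.single z 1)) with hy
  refine ⟨Finsupp.lsum R fun w => LinearMap.toSpanSingleton R M (y w), ?_⟩
  apply Finsupp.lhom_ext
  intro z b
  have h1 : (Finsupp.lsum R fun w => LinearMap.toSpanSingleton R M (y w)) (rel G z)
      = f (Finsupp.single z 1) := by
    rw [rel, map_sub, map_sum]
    simp only [Finsupp.lsum_single, LinearMap.toSpanSingleton_apply, one_smul, map_smul]
    simpa using ysol_spec G hM' 0 (fun z => f (Finsupp.single z 1)) z.1 z.2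
  have h2 : Finsupp.single z b = b • Finsupp.single z (1 : R) := by
    simp [Finsupp.smul_single]
  calc (Finsupp.lsum R fun w => LinearMap.toSpanSingleton R M (y w)).comp (sigma G)
        (Finsupp.single z b)
      = (Finsupp.lsum R fun w => LinearMap.toSpanSingleton R M (y w)) (b • rel G z) := by
        rw [LinearMap.comp_apply, sigma_single]
    _ = b • f (Finsupp.single z 1) := by rw [map_smul, h1]
    _ = f (Finsupp.single z b) := by rw [h2, map_smul]

/-- in D_sigma implies G-divisible. -/
lemma memDiv_of_memD (hft : GabrielFiniteType G) (hD : MemD (sigma G) M) : MemDiv G M := by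
  intro I hI
  obtain ⟨J, hJG, hJI, hfg⟩ := hft I hI
  obtain ⟨n, a, ha⟩ := Submodule.fg_iff_exists_fin_generating_family.1 hfg
  rw [Ideal.submodule_span_eq] at ha
  rw [eq_top_iff]
  intro m _
  classical
  set p0 : Lam G := (⟨n, a, by rw [ha]; exact hJG⟩, true) with hp0
  set p1 : Lam G := (⟨n, a, by rw [ha]; exact hJG⟩, false) with hp1
  set f : F' G →ₗ[R] M := Finsupp.lsum R fun z =>
    LinearMap.toSpanSingleton R M (if z = (([] : W G), p0) then m else 0) with hf
  obtain ⟨g, hg⟩ := hD f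
  have key : ∀ z : W G × Lam G,
      g (rel G z) = (if z = (([] : W G), p0) then m else 0) := by
    intro z
    have := congrArg (fun h : F' G →ₗ[R] M => h (Finsupp.single z 1)) hg
    simpa [f, sigma_single, one_smul] using this
  have e0 := key (([] : W G), p0)
  have e1 := key (([] : W G), p1)
  rw [if_pos rfl] at e0
  rw [if_neg (by simp [hp0, hp1])] at e1
  rw [rel, map_sub, map_sum] at e0 e1
  simp only [map_smul] at e0 e1
  have hm : m = ∑ i, gens G p0 i •
      (g (Finsupp.single ((⟨p1, i⟩ : Lttr G) :: ([] : W G)) 1)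
        - g (Finsupp.single ((⟨p0, i⟩ : Lttr G) :: ([] : W G)) 1)) := by
    have hgp : gens G p0 = gens G p1 := rfl
    rw [sub_eq_zero] at e1
    simp only [smul_sub, Finset.sum_sub_distrib]
    rw [← hgp] at e1
    rw [← e1, ← e0]
  rw [hm]
  refine Submodule.sum_mem _ fun i _ => Submodule.smul_mem_smul ?_ trivial
  have : gens G p0 i ∈ J := by
    rw [← ha]; exact Ideal.subset_span ⟨i, rfl⟩
  exact hJI this

end main

/-- the silting module -/
abbrev TT : Type u := F G ⧸ LinearMap.range (sigma G)

lemma rel_mem_range (z : W G × Lam G) : rel G z ∈ LinearMap.range (sigma G) :=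
  ⟨Finsupp.single z 1, by rw [sigma_single, one_smul]⟩

lemma memDiv_TT (hft : GabrielFiniteType G) : MemDiv G (TT G) := by
  intro I hI
  obtain ⟨J, hJG, hJI, hfg⟩ := hft I hI
  obtain ⟨n, a, ha⟩ := Submodule.fg_iff_exists_fin_generating_family.1 hfg
  rw [Ideal.submodule_span_eq] at ha
  set p0 : Lam G := (⟨n, a, by rw [ha]; exact hJG⟩, true) with hp0
  set π := (LinearMap.range (sigma G)).mkQ with hπ
  have hsingle : ∀ w : W G, π (Finsupp.single w (1 : R)) ∈ I • (⊤ : Submodule R (TT G)) := by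
    intro w
    have hz : π (rel G (w, p0)) = 0 := by
      rw [hπ, Submodule.mkQ_apply, Submodule.Quotient.mk_eq_zero]
      exact rel_mem_range G _
    rw [rel, map_sub, map_sum, sub_eq_zero] at hz
    rw [hz]
    refine Submodule.sum_mem _ fun i _ => ?_
    rw [map_smul]
    refine Submodule.smul_mem_smul (hJI ?_) trivial
    rw [← ha]; exact Ideal.subset_span ⟨i, rfl⟩
  rw [eq_top_iff]
  intro x _
  obtain ⟨y, rfl⟩ := Submodule.mkQ_surjective _ x
  induction y using Finsupp.induction with
  | zero => simpa using Submodule.zero_mem _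
  | single_add w r f _ _ ih =>
    rw [map_add]
    refine Submodule.add_mem _ ?_ (ih trivial)
    have : (Finsupp.single w r : F G) = r • Finsupp.single w 1 := by
      simp [Finsupp.smul_single]
    rw [this, map_smul]
    exact Submodule.smul_of_tower_mem _ r (hsingle w)

lemma memDiv_finsupp {ι : Type u} {T : Type u} [AddCommGroup T] [Module R T]
    (hT : MemDiv G T) : MemDiv G (ι →₀ T) := by
  intro I hI
  rw [eq_top_iff]
  intro x _
  induction x using Finsupp.induction with
  | zero => exact Submodule.zero_mem _
  | single_add i t f _ _ ih =>
    refine Submodule.add_mem _ ?_ (ih trivial)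
    have ht : t ∈ I • (⊤ : Submodule R T) := by rw [hT I hI]; trivial
    have h1 : (Finsupp.single i t : ι →₀ T)
        ∈ Submodule.map (Finsupp.lsingle (M := T) (R := R) i) (I • ⊤) := ⟨t, ht, rfl⟩
    rw [Submodule.map_smul''] at h1
    exact (smul_mono_right I (le_top : Submodule.map (Finsupp.lsingle (M := T) (R := R) i) ⊤ ≤ ⊤) : _) h1

lemma memDiv_of_surjective {N : Type u} [AddCommGroup N] [Module R N]
    (g : N →ₗ[R] M) (hs : Function.Surjective g) (hN : MemDiv G N) : MemDiv G M := by
  intro I hI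
  have h1 : Submodule.map g ⊤ = ⊤ := by
    rw [Submodule.map_top]; exact LinearMap.range_eq_top.2 hs
  rw [← h1, ← Submodule.map_smul'', hN I hI]

lemma memGen_of_memDiv (hM : MemDiv G M) : MemGen R (TT G) M := by
  have hmap : ∀ m : M, ∃ h : TT G →ₗ[R] M,
      h ((LinearMap.range (sigma G)).mkQ (Finsupp.single ([] : W G) 1)) = m := by
    intro m
    set hM' : ∀ p : Lam G, Ideal.span (Set.range (gens G p)) • (⊤ : Submodule R M) = ⊤ :=
      fun p => hM _ (gens_span_mem G p) with hMdef
    set y : W G → M := ysol G hM' m 0 with hy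
    set g0 : F G →ₗ[R] M := Finsupp.lsum R fun w => LinearMap.toSpanSingleton R M (y w) with hg0
    have hker : LinearMap.range (sigma G) ≤ LinearMap.ker g0 := by
      rw [LinearMap.range_le_ker_iff]
      apply Finsupp.lhom_ext
      intro z b
      have h1 : g0 (rel G z) = 0 := by
        rw [rel, map_sub, map_sum]
        simp only [hg0, Finsupp.lsum_single, LinearMap.toSpanSingleton_apply, one_smul, map_smul]
        simpa using ysol_spec G hM' m 0 z.1 z.2
      rw [LinearMap.comp_apply, sigma_single, map_smul, h1, smul_zero]
      rfl
    refine ⟨Submodule.liftQ _ g0 hker, ?_⟩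
    rw [Submodule.mkQ_apply, Submodule.liftQ_apply]
    simp only [hg0, Finsupp.lsum_single, LinearMap.toSpanSingleton_apply, one_smul]
    rfl
  choose h hh using hmap
  refine ⟨M, Finsupp.lsum R h, fun m => ?_⟩
  exact ⟨Finsupp.single m ((LinearMap.range (sigma G)).mkQ (Finsupp.single ([] : W G) 1)),
    by rw [Finsupp.lsum_single]; exact hh m⟩

lemma memDiv_of_memGen (hft : GabrielFiniteType G) (h : MemGen R (TT G) M) : MemDiv G M := by
  obtain ⟨ι, g, hs⟩ := h
  exact memDiv_of_surjective G g hs (memDiv_finsupp G (memDiv_TT G hft))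

end Stmt15Aux

/-- For every Gabriel filter of finite type `G` over a commutative ring there is a
silting module `T` with `Gen T = Div G`. -/
theorem stmt_15 {R : Type u} [CommRing R]
    (G : Set (Ideal R)) (hG : IsGabrielFilter G) (hft : GabrielFiniteType G) :
    ∃ (T : Type u) (_ : AddCommGroup T) (_ : Module R T),
      IsSilting R T ∧
      ∀ (M : Type u) [AddCommGroup M] [Module R M], MemGen R T M ↔ MemDiv G M := by
  classical
  refine ⟨Stmt15Aux.TT G, inferInstance, inferInstance, ?_, ?_⟩
  · refine ⟨Stmt15Aux.F' G, Stmt15Aux.F G, inferInstance, inferInstance,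
      inferInstance, inferInstance,
      Module.Projective.of_basis Finsupp.basisSingleOne,
      Module.Projective.of_basis Finsupp.basisSingleOne,
      Stmt15Aux.sigma G, (LinearMap.range (Stmt15Aux.sigma G)).mkQ,
      Submodule.mkQ_surjective _, Submodule.ker_mkQ _, ?_⟩
    intro M _ _
    constructor
    · intro h
      exact Stmt15Aux.memD_of_memDiv G (Stmt15Aux.memDiv_of_memGen G hft h)
    · intro h
      exact Stmt15Aux.memGen_of_memDiv G (Stmt15Aux.memDiv_of_memD G hft h)
  · intro M _ _
    exact ⟨Stmt15Aux.memDiv_of_memGen G hft, Stmt15Aux.memGen_of_memDiv G⟩
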